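/- If s is the conjugate of a nonincreasing tuple c with all components at most m, then c and s have the same type, i.e., the number of distinct nonzero values among the components of c equals the number of distinct nonzero values among the components of s. -/

import Mathlib

/-- Row sums of a matrix. -/
def rowSum {m n : ℕ} (A : Matrix (Fin m) (Fin n) ℕ) (i : Fin m) : ℕ := ∑ j, A i j

/-- Column sums of a matrix. -/
def colSum {m n : ℕ} (A : Matrix (Fin m) (Fin n) ℕ) (j : Fin n) : ℕ := ∑ i, A i j

/-- A (0,1)-matrix. -/
def ZeroOne {m n : ℕ} (A : Matrix (Fin m) (Fin n) ℕ) : Prop := ∀ i j, A i j ≤ 1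

/-- A matrix is monotone if its row sums and column sums are nonincreasing. -/
def MonotoneMat {m n : ℕ} (A : Matrix (Fin m) (Fin n) ℕ) : Prop :=
  Antitone (rowSum A) ∧ Antitone (colSum A)

/-- The conjugate of the tuple `c`, with respect to bound `m`:
`s i = |{j : c j ≥ i}|` where `i` is read 1-indexed (so `i : Fin m` stands for `i+1`). -/
def conjTuple (m : ℕ) {n : ℕ} (c : Fin n → ℕ) (i : Fin m) : ℕ :=
  (Finset.univ.filter (fun j => (i : ℕ) + 1 ≤ c j)).card

/-- `r` is majorized by `s`: partial sums of `r` are dominated by those of `s`,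
with equal total sums. -/
def MajorizedBy {m : ℕ} (r s : Fin m → ℕ) : Prop :=
  (∀ h : Fin m, ∑ i ∈ Finset.Iic h, r i ≤ ∑ i ∈ Finset.Iic h, s i) ∧
  (∑ i, r i = ∑ i, s i)

/-- The type of a tuple: the number of distinct nonzero values among its components. -/
def tupleType {n : ℕ} (c : Fin n → ℕ) : ℕ :=
  ((Finset.univ.image c).filter (fun x => x ≠ 0)).card

/-- A nonincreasing tuple and its conjugate have the same type. -/
theorem conjTuple_tupleType (m n : ℕ) (c : Fin n → ℕ)
    (hc : Antitone c) (hcm : ∀ j, c j ≤ m) :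
    tupleType (conjTuple m c) = tupleType c := by
  classical
  set f : ℕ → ℕ := fun v => (Finset.univ.filter (fun j => v ≤ c j)).card with hf
  -- strict antitonicity of f on values of c
  have hstrict : ∀ a b : ℕ, (∃ j, c j = a) → a < b → f b < f a := by
    intro a b ⟨j, hj⟩ hab
    apply Finset.card_lt_card
    constructor
    · intro x hx
      simp only [Finset.mem_filter, Finset.mem_univ, true_and] at hx ⊢
      omega
    · intro hsub
      have hja : j ∈ Finset.univ.filter (fun j' => a ≤ c j') := by simp [hj]
      have := hsub hja
      simp only [Finset.mem_filter, Finset.mem_univ, true_and] at this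
      omega
  have himg : (Finset.univ.image (conjTuple m c)).filter (fun x => x ≠ 0)
      = ((Finset.univ.image c).filter (fun x => x ≠ 0)).image f := by
    ext x
    simp only [Finset.mem_filter, Finset.mem_image, Finset.mem_univ, true_and]
    constructor
    · rintro ⟨⟨i, rfl⟩, hx⟩
      have hS : (Finset.univ.filter (fun j => (i : ℕ) + 1 ≤ c j)).Nonempty := by
        rw [← Finset.card_pos]
        exact Nat.pos_of_ne_zero hx
      obtain ⟨j0, hj0⟩ := hS
      set T := (Finset.univ.filter (fun j => (i : ℕ) + 1 ≤ c j)).image c with hT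
      have hTne : T.Nonempty := ⟨c j0, Finset.mem_image_of_mem c hj0⟩
      set v := T.min' hTne with hv
      have hvT : v ∈ T := T.min'_mem hTne
      obtain ⟨j1, hj1, hj1v⟩ := Finset.mem_image.mp hvT
      simp only [Finset.mem_filter, Finset.mem_univ, true_and] at hj1
      refine ⟨v, ⟨⟨j1, hj1v⟩, by omega⟩, ?_⟩
      have hfilt : Finset.univ.filter (fun j => v ≤ c j)
          = Finset.univ.filter (fun j => (i : ℕ) + 1 ≤ c j) := by
        ext j
        simp only [Finset.mem_filter, Finset.mem_univ, true_and]
        constructor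
        · intro h; omega
        · intro h
          exact T.min'_le _ (Finset.mem_image_of_mem c (Finset.mem_filter.mpr ⟨Finset.mem_univ _, h⟩))
      show f v = conjTuple m c i
      simp only [hf, conjTuple, hfilt]
    · rintro ⟨v, ⟨⟨j, rfl⟩, hv⟩, rfl⟩
      have hm : c j - 1 < m := by have := hcm j; omega
      constructor
      · refine ⟨⟨c j - 1, hm⟩, ?_⟩
        have hfilt : Finset.univ.filter (fun j' => (c j - 1) + 1 ≤ c j')
            = Finset.univ.filter (fun j' => c j ≤ c j') := by
          ext j'
          simp only [Finset.mem_filter, Finset.mem_univ, true_and]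
          omega
        show conjTuple m c _ = f (c j)
        simp only [conjTuple, hf, hfilt]
      · have hjmem : j ∈ Finset.univ.filter (fun j' => c j ≤ c j') := by simp
        have : 0 < f (c j) := Finset.card_pos.mpr ⟨j, hjmem⟩
        omega
  rw [tupleType, tupleType, himg, Finset.card_image_of_injOn]
  intro a ha b hb hab
  simp only [Finset.mem_coe, Finset.mem_filter, Finset.mem_image, Finset.mem_univ,
    true_and] at ha hb
  rcases lt_trichotomy a b with h | h | h
  · exact absurd hab.symm (Nat.ne_of_lt (hstrict a b ha.1 h))
  · exact h
  · exact absurd hab (Nat.ne_of_lt (hstrict b a hb.1 h))
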